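/- For every k ≥ 1, in the free associative algebra FreeAlgebra ℚ (Fin (k+1)) with generators X_0, X_1, …, X_k, the element X_0 * μ_k(X_1,…,X_k) − μ_k(X_0,…,X_{k−1}) * X_k lies in the ℚ-submodule spanned by all commutators {a*b − b*a : a, b ∈ FreeAlgebra ℚ (Fin (k+1))}. (Equivalently, Tr X_0 μ_k(X_1,…,X_k) = Tr μ_k(X_0,…,X_{k−1}) X_k for the formal trace onto cyclic words.) -/

import Mathlib

open scoped Classical BigOperators

noncomputable section

/-- Number of descents of a permutation of `Fin k`:
`des σ = #{1 ≤ i ≤ k−1 : σ(i) > σ(i+1)}`. -/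
def descents {k : ℕ} (σ : Equiv.Perm (Fin k)) : ℕ :=
  (Finset.univ.filter fun i : Fin k =>
    ∃ h : (i : ℕ) + 1 < k, σ ⟨(i : ℕ) + 1, h⟩ < σ i).card

/-- Number of ascents of a permutation of `Fin k`: `asc σ = (k−1) − des σ`. -/
def ascents {k : ℕ} (σ : Equiv.Perm (Fin k)) : ℕ := (k - 1) - descents σ

/-- The `k`-th Magnus commutator in the free associative algebra
(Mielnik–Plebański formula):
`μ_k(X_1,…,X_k) = Σ_{σ ∈ S_k} (−1)^{des σ} (asc σ)!(des σ)!/k! · X_{σ(1)} ⋯ X_{σ(k)}`. -/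
def magnus (R : Type*) [Field R] (k : ℕ) : FreeAlgebra R (Fin k) :=
  ∑ σ : Equiv.Perm (Fin k),
    ((-1 : R) ^ descents σ * ((ascents σ).factorial : R) * ((descents σ).factorial : R) /
        (k.factorial : R)) •
      (List.ofFn fun i : Fin k => FreeAlgebra.ι R (σ i)).prod

namespace MT

open Fin.NatCast

/-! ### Cyclic rotation of `Fin (n+1)` -/

def rot (n : ℕ) (i : Fin (n+1)) : Fin (n+1) := i + 1

lemma rot_iterate {n : ℕ} (t : ℕ) (i : Fin (n+1)) : (rot n)^[t] i = i + (t : Fin (n+1)) := by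
  induction t with
  | zero => simp
  | succ t ih =>
      rw [Function.iterate_succ_apply', ih]
      show (i + (t : Fin (n+1))) + 1 = i + ((t:ℕ)+1 : ℕ)
      push_cast
      exact add_assoc _ _ _

lemma finRotate_pow {n : ℕ} (t : ℕ) (i : Fin (n+1)) :
    ((finRotate (n+1))^t) i = i + (t : Fin (n+1)) := by
  induction t with
  | zero => simp
  | succ t ih =>
      rw [pow_succ', Equiv.Perm.mul_apply, ih, finRotate_succ_apply]
      show (i + (t : Fin (n+1))) + 1 = i + ((t:ℕ)+1 : ℕ)
      push_cast
      exact add_assoc _ _ _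

/-! ### Cyclic descents -/

def cdes {n : ℕ} (f : Fin (n+1) → Fin (n+1)) : ℕ :=
  (Finset.univ.filter fun i => f (i + 1) < f i).card

lemma cdes_comp_rot {n : ℕ} (f : Fin (n+1) → Fin (n+1)) : cdes (f ∘ rot n) = cdes f := by
  unfold cdes
  refine Finset.card_bij' (fun i _ => i + 1) (fun j _ => j - 1) ?_ ?_ ?_ ?_
  · intro i hi
    rw [Finset.mem_filter] at hi ⊢
    simp only [Finset.mem_filter, Finset.mem_univ, true_and, Function.comp, rot] at hi ⊢
    exact hi
  · intro j hj
    rw [Finset.mem_filter] at hj ⊢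
    simp only [Finset.mem_filter, Finset.mem_univ, true_and, Function.comp, rot] at hj ⊢
    rwa [sub_add_cancel]
  · intro i _; exact add_sub_cancel_right i 1
  · intro j _; exact sub_add_cancel j 1

lemma cdes_comp_rot_iter {n : ℕ} (t : ℕ) (f : Fin (n+1) → Fin (n+1)) :
    cdes (f ∘ (rot n)^[t]) = cdes f := by
  induction t with
  | zero => simp
  | succ t ih =>
      rw [Function.iterate_succ, ← Function.comp_assoc, cdes_comp_rot, ih]

lemma card_filter_fin_succ {n : ℕ} (p : Fin (n+1) → Prop) [DecidablePred p] :
    (Finset.univ.filter p).card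
      = (if p 0 then 1 else 0) + (Finset.univ.filter fun j : Fin n => p j.succ).card := by
  rw [Finset.card_filter, Finset.card_filter, Fin.sum_univ_succ]

lemma card_filter_fin_castSucc {n : ℕ} (p : Fin (n+1) → Prop) [DecidablePred p] :
    (Finset.univ.filter p).card
      = (Finset.univ.filter fun j : Fin n => p j.castSucc).card
        + (if p (Fin.last n) then 1 else 0) := by
  rw [Finset.card_filter, Finset.card_filter, Fin.sum_univ_castSucc]

variable {m : ℕ}

/-! ### The words `X_0 Y_{σ(1)} ⋯ Y_{σ(k)}` and `Z_{σ(1)} ⋯ Z_{σ(k)} X_k` -/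

def hat (σ : Equiv.Perm (Fin (m+1))) : Fin (m+2) → Fin (m+2) :=
  Fin.cases 0 (fun i => (σ i).succ)

def tau (σ : Equiv.Perm (Fin (m+1))) : Fin (m+2) → Fin (m+2) :=
  Fin.snoc (fun i => (σ i).castSucc) (Fin.last (m+1))

def dcount (σ : Equiv.Perm (Fin (m+1))) : ℕ :=
  (Finset.univ.filter fun j : Fin m => σ j.succ < σ j.castSucc).card

lemma descents_eq (σ : Equiv.Perm (Fin (m+1))) : descents σ = dcount σ := by
  unfold descents dcount
  rw [card_filter_fin_castSucc]
  have h2 : ¬ ∃ h : ((Fin.last m : Fin (m+1)) : ℕ) + 1 < m + 1,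
      σ ⟨((Fin.last m : Fin (m+1)) : ℕ) + 1, h⟩ < σ (Fin.last m) := by
    rintro ⟨h, -⟩
    simp [Fin.val_last] at h
  rw [if_neg h2, add_zero]
  congr 1
  apply Finset.filter_congr
  intro j _
  have hlt : ((j.castSucc : Fin (m+1)) : ℕ) + 1 < m + 1 := by
    simpa using Nat.succ_lt_succ j.isLt
  have e : (⟨((j.castSucc : Fin (m+1)) : ℕ) + 1, hlt⟩ : Fin (m+1)) = j.succ := by
    ext; simp
  constructor
  · rintro ⟨h, H⟩
    rwa [e] at H
  · intro H
    exact ⟨hlt, by rwa [e]⟩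

lemma hat_zero (σ : Equiv.Perm (Fin (m+1))) : hat σ 0 = 0 := rfl

lemma hat_succ (σ : Equiv.Perm (Fin (m+1))) (j : Fin (m+1)) :
    hat σ j.succ = (σ j).succ := Fin.cases_succ _

lemma tau_castSucc (σ : Equiv.Perm (Fin (m+1))) (j : Fin (m+1)) :
    tau σ j.castSucc = (σ j).castSucc := Fin.snoc_castSucc _ _ _

lemma tau_last (σ : Equiv.Perm (Fin (m+1))) : tau σ (Fin.last (m+1)) = Fin.last (m+1) :=
  Fin.snoc_last _ _

lemma cdes_hat (σ : Equiv.Perm (Fin (m+1))) : cdes (hat σ) = dcount σ + 1 := by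
  unfold cdes
  rw [card_filter_fin_succ, card_filter_fin_castSucc]
  have h0 : ¬ hat σ (0 + 1) < hat σ 0 := by
    rw [show hat σ 0 = 0 from rfl]
    exact Fin.not_lt_zero _
  have hlast : hat σ ((Fin.last m).succ + 1) < hat σ (Fin.last m).succ := by
    have e1 : hat σ ((Fin.last m).succ + 1) = 0 := by
      rw [Fin.succ_last, Fin.last_add_one]; rfl
    have e2 : hat σ (Fin.last m).succ = (σ (Fin.last m)).succ := Fin.cases_succ _
    rw [e1, e2]
    exact Fin.succ_pos _
  rw [if_neg h0, if_pos hlast, zero_add]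
  unfold dcount
  have key : ∀ j : Fin m, (hat σ (j.castSucc.succ + 1) < hat σ j.castSucc.succ)
      ↔ (σ j.succ < σ j.castSucc) := by
    intro j
    have eA : (j.castSucc.succ : Fin (m+2)) + 1 = j.succ.succ := by
      rw [Fin.succ_castSucc, Fin.coeSucc_eq_succ]
    rw [eA]
    rw [show hat σ j.succ.succ = (σ j.succ).succ from Fin.cases_succ _,
        show hat σ j.castSucc.succ = (σ j.castSucc).succ from Fin.cases_succ _]
    exact Fin.succ_lt_succ_iff
  simp only [key]

lemma cdes_tau (σ : Equiv.Perm (Fin (m+1))) : cdes (tau σ) = dcount σ + 1 := by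
  unfold cdes
  rw [card_filter_fin_castSucc]
  have hlast : tau σ (Fin.last (m+1) + 1) < tau σ (Fin.last (m+1)) := by
    have e1 : tau σ (Fin.last (m+1) + 1) = (σ 0).castSucc := by
      rw [Fin.last_add_one]
      rw [show (0 : Fin (m+2)) = Fin.castSucc 0 from rfl]
      exact Fin.snoc_castSucc _ _ _
    have e2 : tau σ (Fin.last (m+1)) = Fin.last (m+1) := Fin.snoc_last _ _
    rw [e1, e2]
    exact Fin.castSucc_lt_last _
  rw [if_pos hlast, card_filter_fin_castSucc]
  have h2 : ¬ tau σ ((Fin.last m).castSucc + 1) < tau σ ((Fin.last m).castSucc) := by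
    have e1 : tau σ ((Fin.last m).castSucc + 1) = Fin.last (m+1) := by
      rw [Fin.coeSucc_eq_succ, Fin.succ_last]
      exact Fin.snoc_last _ _
    have e2 : tau σ ((Fin.last m).castSucc) = (σ (Fin.last m)).castSucc :=
      Fin.snoc_castSucc _ _ _
    rw [e1, e2]
    exact lt_asymm (Fin.castSucc_lt_last _)
  rw [if_neg h2, add_zero]
  unfold dcount
  have key : ∀ j : Fin m, (tau σ (j.castSucc.castSucc + 1) < tau σ j.castSucc.castSucc)
      ↔ (σ j.succ < σ j.castSucc) := by
    intro j
    have eB : (j.castSucc.castSucc : Fin (m+2)) + 1 = j.succ.castSucc := by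
      rw [Fin.coeSucc_eq_succ, Fin.succ_castSucc]
    rw [eB]
    rw [show tau σ j.succ.castSucc = (σ j.succ).castSucc from Fin.snoc_castSucc _ _ _,
        show tau σ j.castSucc.castSucc = (σ j.castSucc).castSucc from Fin.snoc_castSucc _ _ _]
    exact Fin.castSucc_lt_castSucc_iff
  simp only [key]

/-! ### `hat` and `tau` as permutations, and the two decompositions of `S_{k+1}` -/

def hatPerm (σ : Equiv.Perm (Fin (m+1))) : Equiv.Perm (Fin (m+2)) :=
  Equiv.Perm.decomposeFin.symm (0, σ)

lemma hatPerm_coe (σ : Equiv.Perm (Fin (m+1))) : ⇑(hatPerm σ) = hat σ := by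
  funext i
  induction i using Fin.cases with
  | zero => simp [hatPerm, hat]
  | succ j => simp [hatPerm, hat]

def tauPerm (σ : Equiv.Perm (Fin (m+1))) : Equiv.Perm (Fin (m+2)) where
  toFun := tau σ
  invFun := tau σ⁻¹
  left_inv := by
    intro i
    induction i using Fin.lastCases with
    | last => simp [tau]
    | cast j => simp [tau]
  right_inv := by
    intro i
    induction i using Fin.lastCases with
    | last => simp [tau]
    | cast j => simp [tau]

lemma tauPerm_coe (σ : Equiv.Perm (Fin (m+1))) : ⇑(tauPerm σ) = tau σ := rfl

lemma hat_bij :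
    Function.Bijective (fun p : Equiv.Perm (Fin (m+1)) × Fin (m+2) =>
      hatPerm p.1 * (finRotate (m+2)) ^ ((p.2 : ℕ))) := by
  rw [Fintype.bijective_iff_injective_and_card]
  constructor
  · rintro ⟨σ1, t1⟩ ⟨σ2, t2⟩ h
    simp only at h
    have happ : ∀ x : Fin (m+2),
        hat σ1 (x + t1) = hat σ2 (x + t2) := by
      intro x
      have := congrArg (fun g : Equiv.Perm (Fin (m+2)) => g x) h
      simpa [Equiv.Perm.mul_apply, finRotate_pow, hatPerm_coe, Fin.cast_val_eq_self] using this
    have hinj : Function.Injective (hat σ2) := by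
      rw [← hatPerm_coe]; exact (hatPerm σ2).injective
    have h0 := happ (-t1)
    rw [neg_add_cancel, hat_zero] at h0
    have hz : (-t1 + t2 : Fin (m+2)) = 0 := hinj (by rw [← h0, hat_zero])
    have ht : t1 = t2 := neg_add_eq_zero.mp hz
    have hσ : σ1 = σ2 := by
      rw [ht] at h
      have h2 : hatPerm σ1 = hatPerm σ2 := mul_right_cancel h
      have h3 := Equiv.Perm.decomposeFin.symm.injective h2
      exact (Prod.ext_iff.mp h3).2
    exact Prod.ext hσ ht
  · simp only [Fintype.card_perm, Fintype.card_prod, Fintype.card_fin, Nat.factorial_succ]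
    ring

lemma tau_bij :
    Function.Bijective (fun p : Equiv.Perm (Fin (m+1)) × Fin (m+2) =>
      tauPerm p.1 * (finRotate (m+2)) ^ ((p.2 : ℕ))) := by
  rw [Fintype.bijective_iff_injective_and_card]
  constructor
  · rintro ⟨σ1, t1⟩ ⟨σ2, t2⟩ h
    simp only at h
    have happ : ∀ x : Fin (m+2), tau σ1 (x + t1) = tau σ2 (x + t2) := by
      intro x
      have := congrArg (fun g : Equiv.Perm (Fin (m+2)) => g x) h
      simpa [Equiv.Perm.mul_apply, finRotate_pow, tauPerm_coe, Fin.cast_val_eq_self] using this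
    have hinj : Function.Injective (tau σ2) := (tauPerm σ2).injective
    have h0 := happ (Fin.last (m+1) - t1)
    rw [sub_add_cancel, tau_last] at h0
    have hz : (Fin.last (m+1) - t1 + t2 : Fin (m+2)) = Fin.last (m+1) :=
      hinj (by rw [← h0, tau_last])
    have ht : t1 = t2 := by
      have : Fin.last (m+1) - t1 + t2 = Fin.last (m+1) - t1 + t1 := by
        rw [hz, sub_add_cancel]
      exact (add_left_cancel this).symm
    have hσ : σ1 = σ2 := by
      rw [ht] at h
      have h2 : tauPerm σ1 = tauPerm σ2 := mul_right_cancel h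
      have h3 : tau σ1 = tau σ2 := by
        rw [← tauPerm_coe, ← tauPerm_coe, h2]
      ext j
      have h5 : σ1 j = σ2 j := by
        have := congrFun h3 j.castSucc
        simpa [tau, Fin.snoc_castSucc, Fin.castSucc_inj] using this
      exact congrArg Fin.val h5
    exact Prod.ext hσ ht
  · simp only [Fintype.card_perm, Fintype.card_prod, Fintype.card_fin, Nat.factorial_succ]
    ring

/-! ### The formal trace -/

def csp (n : ℕ) : Submodule ℚ (FreeAlgebra ℚ (Fin (n+1))) :=
  Submodule.span ℚ {x | ∃ a b, x = a * b - b * a}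

def T {n : ℕ} (f : Fin (n+1) → Fin (n+1)) : FreeAlgebra ℚ (Fin (n+1)) ⧸ csp n :=
  Submodule.Quotient.mk (List.ofFn fun i => FreeAlgebra.ι ℚ (f i)).prod

lemma mk_comm {n : ℕ} (a b : FreeAlgebra ℚ (Fin (n+1))) :
    (Submodule.Quotient.mk (a * b) : _ ⧸ csp n) = Submodule.Quotient.mk (b * a) := by
  rw [Submodule.Quotient.eq]
  exact Submodule.subset_span ⟨a, b, rfl⟩

lemma T_rot {n : ℕ} (f : Fin (n+1) → Fin (n+1)) : T (f ∘ rot n) = T f := by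
  unfold T
  rw [show (List.ofFn fun i => FreeAlgebra.ι ℚ ((f ∘ rot n) i))
      = (List.ofFn fun j : Fin n =>
          FreeAlgebra.ι ℚ ((f ∘ rot n) j.castSucc)).concat
          (FreeAlgebra.ι ℚ ((f ∘ rot n) (Fin.last n))) from List.ofFn_succ' _,
    show (List.ofFn fun i => FreeAlgebra.ι ℚ (f i))
      = FreeAlgebra.ι ℚ (f 0) :: (List.ofFn fun j : Fin n => FreeAlgebra.ι ℚ (f j.succ)) from
        List.ofFn_succ,
    List.prod_concat, List.prod_cons]
  have e1 : ∀ j : Fin n, (f ∘ rot n) j.castSucc = f j.succ := by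
    intro j
    simp only [Function.comp, rot, Fin.coeSucc_eq_succ]
  have e2 : (f ∘ rot n) (Fin.last n) = f 0 := by
    simp only [Function.comp, rot, Fin.last_add_one]
  simp only [e1, e2]
  exact mk_comm _ _

lemma T_rot_iter {n : ℕ} (t : ℕ) (f : Fin (n+1) → Fin (n+1)) :
    T (f ∘ (rot n)^[t]) = T f := by
  induction t with
  | zero => simp
  | succ t ih =>
      rw [Function.iterate_succ, ← Function.comp_assoc, T_rot, ih]

/-! ### The weighted word assignment -/

def coeffOf (k e : ℕ) : ℚ :=
  (-1 : ℚ) ^ (e - 1) * ((k - e).factorial : ℚ) * ((e - 1).factorial : ℚ) / (k.factorial : ℚ)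

def F (n : ℕ) (f : Fin (n+1) → Fin (n+1)) : FreeAlgebra ℚ (Fin (n+1)) ⧸ csp n :=
  coeffOf n (cdes f) • T f

lemma F_rot_iter {n : ℕ} (t : ℕ) (f : Fin (n+1) → Fin (n+1)) :
    F n (f ∘ (rot n)^[t]) = F n f := by
  unfold F
  rw [cdes_comp_rot_iter, T_rot_iter]

lemma perm_coe_hat (σ : Equiv.Perm (Fin (m+1))) (t : Fin (m+2)) :
    ⇑(hatPerm σ * (finRotate (m+2)) ^ ((t : Fin (m+2)) : ℕ))
      = hat σ ∘ (rot (m+1))^[(t : ℕ)] := by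
  funext x
  simp only [Equiv.Perm.mul_apply, Function.comp_apply, finRotate_pow, rot_iterate, hatPerm_coe]

lemma perm_coe_tau (σ : Equiv.Perm (Fin (m+1))) (t : Fin (m+2)) :
    ⇑(tauPerm σ * (finRotate (m+2)) ^ ((t : Fin (m+2)) : ℕ))
      = tau σ ∘ (rot (m+1))^[(t : ℕ)] := by
  funext x
  simp only [Equiv.Perm.mul_apply, Function.comp_apply, finRotate_pow, rot_iterate, tauPerm_coe]

lemma sum_F_hat :
    ∑ g : Equiv.Perm (Fin (m+2)), F (m+1) ⇑g
      = (m+2) • ∑ σ : Equiv.Perm (Fin (m+1)), F (m+1) (hat σ) := by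
  rw [← Fintype.sum_bijective _ (hat_bij (m := m)) _ (fun g => F (m+1) ⇑g) (fun p => rfl)]
  have : ∀ p : Equiv.Perm (Fin (m+1)) × Fin (m+2),
      F (m+1) ⇑(hatPerm p.1 * (finRotate (m+2)) ^ ((p.2 : Fin (m+2)) : ℕ))
        = F (m+1) (hat p.1) := by
    rintro ⟨σ, t⟩
    rw [perm_coe_hat, F_rot_iter]
  simp only [this]
  rw [Fintype.sum_prod_type_right]
  simp [Finset.sum_const, Fintype.card_fin]

lemma sum_F_tau :
    ∑ g : Equiv.Perm (Fin (m+2)), F (m+1) ⇑g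
      = (m+2) • ∑ σ : Equiv.Perm (Fin (m+1)), F (m+1) (tau σ) := by
  rw [← Fintype.sum_bijective _ (tau_bij (m := m)) _ (fun g => F (m+1) ⇑g) (fun p => rfl)]
  have : ∀ p : Equiv.Perm (Fin (m+1)) × Fin (m+2),
      F (m+1) ⇑(tauPerm p.1 * (finRotate (m+2)) ^ ((p.2 : Fin (m+2)) : ℕ))
        = F (m+1) (tau p.1) := by
    rintro ⟨σ, t⟩
    rw [perm_coe_tau, F_rot_iter]
  simp only [this]
  rw [Fintype.sum_prod_type_right]
  simp [Finset.sum_const, Fintype.card_fin]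

lemma sum_hat_eq_sum_tau :
    ∑ σ : Equiv.Perm (Fin (m+1)), F (m+1) (hat σ)
      = ∑ σ : Equiv.Perm (Fin (m+1)), F (m+1) (tau σ) := by
  have h := (sum_F_hat (m := m)).symm.trans (sum_F_tau (m := m))
  have h' : ((m+2 : ℕ) : ℚ) • ∑ σ : Equiv.Perm (Fin (m+1)), F (m+1) (hat σ)
      = ((m+2 : ℕ) : ℚ) • ∑ σ : Equiv.Perm (Fin (m+1)), F (m+1) (tau σ) := by
    rw [Nat.cast_smul_eq_nsmul, Nat.cast_smul_eq_nsmul]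
    exact h
  have hne : ((m+2 : ℕ) : ℚ) ≠ 0 := by positivity
  exact smul_right_injective _ hne h'

/-! ### Coefficients -/

lemma coeff_eq (σ : Equiv.Perm (Fin (m+1))) :
    ((-1 : ℚ) ^ descents σ * ((ascents σ).factorial : ℚ) * ((descents σ).factorial : ℚ) /
        ((m+1).factorial : ℚ))
      = coeffOf (m+1) (dcount σ + 1) := by
  unfold coeffOf ascents
  rw [descents_eq]
  have e1 : dcount σ + 1 - 1 = dcount σ := by omega
  have e2 : m + 1 - (dcount σ + 1) = (m + 1 - 1) - dcount σ := by omega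
  rw [e1, e2]

end MT

/-- Cyclic trace symmetry of the Magnus commutators:
`X_0·μ_k(X_1,…,X_k) − μ_k(X_0,…,X_{k−1})·X_k` is a linear combination of commutators. -/
theorem magnus_trace_cyclic (k : ℕ) (hk : 1 ≤ k) :
    FreeAlgebra.ι ℚ (0 : Fin (k + 1)) *
        FreeAlgebra.lift ℚ (fun i : Fin k => FreeAlgebra.ι ℚ i.succ) (magnus ℚ k) -
      FreeAlgebra.lift ℚ (fun i : Fin k => FreeAlgebra.ι ℚ i.castSucc) (magnus ℚ k) *
        FreeAlgebra.ι ℚ (Fin.last k) ∈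
      Submodule.span ℚ
        {x : FreeAlgebra ℚ (Fin (k + 1)) |
          ∃ a b : FreeAlgebra ℚ (Fin (k + 1)), x = a * b - b * a} := by
  obtain ⟨m, rfl⟩ : ∃ m, k = m + 1 := ⟨k - 1, (Nat.succ_pred_eq_of_pos hk).symm⟩
  -- pass to the quotient
  refine (Submodule.Quotient.eq (MT.csp (m+1))).mp ?_
  -- compute the two sides
  have hL : FreeAlgebra.ι ℚ (0 : Fin (m + 2)) *
        FreeAlgebra.lift ℚ (fun i : Fin (m+1) => FreeAlgebra.ι ℚ i.succ) (magnus ℚ (m+1))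
      = ∑ σ : Equiv.Perm (Fin (m+1)),
          ((-1 : ℚ) ^ descents σ * ((ascents σ).factorial : ℚ) *
              ((descents σ).factorial : ℚ) / ((m+1).factorial : ℚ)) •
            (List.ofFn fun i : Fin (m+2) => FreeAlgebra.ι ℚ (MT.hat σ i)).prod := by
    unfold magnus
    rw [map_sum, Finset.mul_sum]
    refine Finset.sum_congr rfl fun σ _ => ?_
    rw [map_smul, mul_smul_comm]
    congr 1
    rw [map_list_prod, List.map_ofFn]
    have hc : (⇑(FreeAlgebra.lift ℚ fun i : Fin (m+1) => FreeAlgebra.ι ℚ i.succ)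
          ∘ fun i : Fin (m+1) => FreeAlgebra.ι ℚ (σ i))
        = fun i : Fin (m+1) => FreeAlgebra.ι ℚ (σ i).succ := by
      funext i; simp [FreeAlgebra.lift_ι_apply]
    rw [hc]
    rw [show (List.ofFn fun i : Fin (m+2) => FreeAlgebra.ι ℚ (MT.hat σ i))
        = FreeAlgebra.ι ℚ (MT.hat σ 0)
          :: (List.ofFn fun j : Fin (m+1) => FreeAlgebra.ι ℚ (MT.hat σ j.succ)) from
        List.ofFn_succ, List.prod_cons]
    simp only [MT.hat_zero, MT.hat_succ, Function.comp, FreeAlgebra.lift_ι_apply]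
  have hR : FreeAlgebra.lift ℚ (fun i : Fin (m+1) => FreeAlgebra.ι ℚ i.castSucc)
          (magnus ℚ (m+1)) * FreeAlgebra.ι ℚ (Fin.last (m+1))
      = ∑ σ : Equiv.Perm (Fin (m+1)),
          ((-1 : ℚ) ^ descents σ * ((ascents σ).factorial : ℚ) *
              ((descents σ).factorial : ℚ) / ((m+1).factorial : ℚ)) •
            (List.ofFn fun i : Fin (m+2) => FreeAlgebra.ι ℚ (MT.tau σ i)).prod := by
    unfold magnus
    rw [map_sum, Finset.sum_mul]
    refine Finset.sum_congr rfl fun σ _ => ?_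
    rw [map_smul, smul_mul_assoc]
    congr 1
    rw [map_list_prod, List.map_ofFn]
    have hc : (⇑(FreeAlgebra.lift ℚ fun i : Fin (m+1) => FreeAlgebra.ι ℚ i.castSucc)
          ∘ fun i : Fin (m+1) => FreeAlgebra.ι ℚ (σ i))
        = fun i : Fin (m+1) => FreeAlgebra.ι ℚ (σ i).castSucc := by
      funext i; simp [FreeAlgebra.lift_ι_apply]
    rw [hc]
    rw [show (List.ofFn fun i : Fin (m+2) => FreeAlgebra.ι ℚ (MT.tau σ i))
        = (List.ofFn fun j : Fin (m+1) =>
            FreeAlgebra.ι ℚ (MT.tau σ j.castSucc)).concat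
            (FreeAlgebra.ι ℚ (MT.tau σ (Fin.last (m+1)))) from List.ofFn_succ' _,
      List.prod_concat]
    simp only [MT.tau_last, MT.tau_castSucc, Function.comp, FreeAlgebra.lift_ι_apply]
  rw [hL, hR]
  -- push to the quotient
  rw [show (Submodule.Quotient.mk : _ → _ ⧸ MT.csp (m+1)) = ⇑(MT.csp (m+1)).mkQ from rfl]
  rw [map_sum, map_sum]
  have hLq : ∀ σ : Equiv.Perm (Fin (m+1)),
      (MT.csp (m+1)).mkQ
        (((-1 : ℚ) ^ descents σ * ((ascents σ).factorial : ℚ) *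
            ((descents σ).factorial : ℚ) / ((m+1).factorial : ℚ)) •
          (List.ofFn fun i : Fin (m+2) => FreeAlgebra.ι ℚ (MT.hat σ i)).prod)
        = MT.F (m+1) (MT.hat σ) := by
    intro σ
    rw [map_smul]
    unfold MT.F
    rw [MT.cdes_hat, ← MT.coeff_eq]
    rfl
  have hRq : ∀ σ : Equiv.Perm (Fin (m+1)),
      (MT.csp (m+1)).mkQ
        (((-1 : ℚ) ^ descents σ * ((ascents σ).factorial : ℚ) *
            ((descents σ).factorial : ℚ) / ((m+1).factorial : ℚ)) •
          (List.ofFn fun i : Fin (m+2) => FreeAlgebra.ι ℚ (MT.tau σ i)).prod)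
        = MT.F (m+1) (MT.tau σ) := by
    intro σ
    rw [map_smul]
    unfold MT.F
    rw [MT.cdes_tau, ← MT.coeff_eq]
    rfl
  simp only [hLq, hRq]
  exact MT.sum_hat_eq_sum_tau

end
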